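/- For all even n ≥ 6, Ā_n − (n/8)sin(2π/n) > 0 and moreover n²·(Ā_n − (n/8)sin(2π/n)) ≥ π³/32 for all even n ≥ 6. -/

import Mathlib

open Real

lemma pow_chain {x c : ℝ} (hx0 : 0 < x) (h : x ≤ c) (k : ℕ) : x^(k+1) ≤ c * x^k := by
  have := pow_pos hx0 k
  calc x^(k+1) = x * x^k := by ring
  _ ≤ c * x^k := by nlinarith

lemma sin_lb {x : ℝ} (h0 : 0 ≤ x) (h1 : x ≤ 1) : x - x^3/6 - 5*x^4/96 ≤ Real.sin x := by
  have := abs_le.1 (Real.sin_bound (x := x) (by rwa [abs_of_nonneg h0]))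
  rw [abs_of_nonneg h0] at this; nlinarith [this.1, this.2, mul_le_mul_of_nonneg_right h1 (pow_nonneg h0 4)]

lemma sin_ub {x : ℝ} (h0 : 0 ≤ x) (h1 : x ≤ 1) : Real.sin x ≤ x - x^3/6 + 5*x^4/96 := by
  have := abs_le.1 (Real.sin_bound (x := x) (by rwa [abs_of_nonneg h0]))
  rw [abs_of_nonneg h0] at this; nlinarith [this.1, this.2, mul_le_mul_of_nonneg_right h1 (pow_nonneg h0 4)]

lemma cos_lb {x : ℝ} (h0 : 0 ≤ x) (h1 : x ≤ 1) : 1 - x^2/2 - 5*x^4/96 ≤ Real.cos x := by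
  have := abs_le.1 (Real.cos_bound (x := x) (by rwa [abs_of_nonneg h0]))
  rw [abs_of_nonneg h0] at this; linarith [this.1, this.2]

lemma cos_ub {x : ℝ} (h0 : 0 ≤ x) (h1 : x ≤ 1) : Real.cos x ≤ 1 - x^2/2 + 5*x^4/96 := by
  have := abs_le.1 (Real.cos_bound (x := x) (by rwa [abs_of_nonneg h0]))
  rw [abs_of_nonneg h0] at this; linarith [this.1, this.2]

lemma Dpos {y : ℝ} (hy0 : 0 < y) (hy1 : y ≤ 0.32) : (0:ℝ) < 1 - y^2/2 - 5*y^4/96 := by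
  nlinarith [pow_chain hy0 hy1 1, pow_chain hy0 hy1 2, pow_chain hy0 hy1 3,
    pow_pos hy0 1, pow_pos hy0 2, pow_pos hy0 3, pow_pos hy0 4]

lemma tan_ub {y : ℝ} (hy0 : 0 < y) (hy1 : y ≤ 0.32) :
    Real.tan y ≤ (y - y^3/6 + 5*y^4/96) / (1 - y^2/2 - 5*y^4/96) := by
  have hsy := sin_ub hy0.le (by linarith)
  have hcy := cos_lb hy0.le (by linarith)
  rw [Real.tan_eq_sin_div_cos]
  have hnum : (0:ℝ) ≤ y - y^3/6 + 5*y^4/96 := by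
    nlinarith [pow_chain hy0 hy1 1, pow_chain hy0 hy1 2, pow_chain hy0 hy1 3, pow_pos hy0 2, pow_pos hy0 3, pow_pos hy0 4]
  exact div_le_div₀ hnum hsy (Dpos hy0 hy1) hcy

lemma Hpos {x : ℝ} (hx0 : 0 < x) (hx1 : x ≤ 0.394) :
    x * (1 - (4*x/7)^2/6 + 5*(4*x/7)^3/96) + x^3/8
      ≤ (1 - (4*x/7)^2/2 - 5*(4*x/7)^4/96) * ((x - x^3/6 - 5*x^4/96) * (1 + x^2/2 - 5*x^4/96)) := by
  have p := pow_chain hx0 hx1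
  have q : ∀ k : ℕ, 0 < x^k := fun k => pow_pos hx0 k
  nlinarith [p 3, p 4, p 5, p 6, p 7, p 8, p 9, p 10, p 11, q 3, q 4, q 5, q 6, q 7, q 8, q 9, q 10, q 11, q 12]

lemma poly8 {x y : ℝ} (hx0 : 0 < x) (hx1 : x ≤ 0.394) (hy0 : 0 < y) (hyx : y ≤ 4*x/7) :
    x * (y - y^3/6 + 5*y^4/96) + x^3/8 * y
      ≤ y * ((1 - y^2/2 - 5*y^4/96) * ((x - x^3/6 - 5*x^4/96) * (1 + x^2/2 - 5*x^4/96))) := by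
  set Q := (x - x^3/6 - 5*x^4/96) * (1 + x^2/2 - 5*x^4/96) with hQdef
  set v := 4*x/7 with hvdef
  have p := pow_chain hx0 hx1
  have q : ∀ k : ℕ, 0 < x^k := fun k => pow_pos hx0 k
  have hQx : x/3 ≤ Q := by
    rw [hQdef]
    nlinarith [p 1, p 2, p 3, p 4, p 5, p 6, p 7, q 1, q 2, q 3, q 4, q 5, q 6, q 7, q 8]
  have hv0 : 0 < v := by rw [hvdef]; linarith
  have hy2 : y^2 ≤ v^2 := by nlinarith
  have hy3 : y^3 ≤ v^3 := by nlinarith [mul_pos hy0 hy0, mul_pos hv0 hv0]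
  have hy4 : y^4 ≤ v^4 := by nlinarith [sq_nonneg y, sq_nonneg v, sq_nonneg (y+v)]
  have hmono : (1 - v^2/2 - 5*v^4/96)*Q - x*(1 - v^2/6 + 5*v^3/96)
      ≤ (1 - y^2/2 - 5*y^4/96)*Q - x*(1 - y^2/6 + 5*y^3/96) := by
    nlinarith [mul_nonneg (by linarith : (0:ℝ) ≤ v^2 - y^2) (by linarith : (0:ℝ) ≤ Q/2 - x/6),
      mul_nonneg (by linarith : (0:ℝ) ≤ v^4 - y^4) (by linarith : (0:ℝ) ≤ Q),
      mul_nonneg (by linarith : (0:ℝ) ≤ v^3 - y^3) hx0.le]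
  have hinner : 0 ≤ (1 - y^2/2 - 5*y^4/96)*Q - x*(1 - y^2/6 + 5*y^3/96) - x^3/8 := by
    have h := Hpos hx0 hx1
    rw [← hQdef, ← hvdef] at h
    linarith
  have := mul_nonneg hy0.le hinner
  nlinarith [this]

lemma key8 {x y : ℝ} (hx0 : 0 < x) (hx1 : x ≤ 0.394) (hy0 : 0 < y) (hyx : y ≤ 4*x/7) :
    x^2/8 ≤ Real.sin x * (2 - Real.cos x) / x - Real.tan y / y := by
  have hy1 : y ≤ 0.32 := by linarith
  have hsx := sin_lb hx0.le (by linarith)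
  have hcx := cos_ub hx0.le (by linarith)
  have htan := tan_ub hy0 hy1
  set N := y - y^3/6 + 5*y^4/96 with hN
  set D := 1 - y^2/2 - 5*y^4/96 with hD
  set Q := (x - x^3/6 - 5*x^4/96) * (1 + x^2/2 - 5*x^4/96) with hQ
  have hD0 : (0:ℝ) < D := Dpos hy0 hy1
  have hD1 : D ≤ 1 := by
    rw [hD]; nlinarith [sq_nonneg y, sq_nonneg (y*y)]
  have hsinx : (0:ℝ) ≤ Real.sin x := by
    apply Real.sin_nonneg_of_nonneg_of_le_pi hx0.le
    nlinarith [Real.pi_gt_d6]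
  have hCx : (0:ℝ) ≤ 1 + x^2/2 - 5*x^4/96 := by
    nlinarith [pow_chain hx0 hx1 1, pow_chain hx0 hx1 2, pow_chain hx0 hx1 3,
      pow_pos hx0 2, pow_pos hx0 3, pow_pos hx0 4]
  have hprod : Q ≤ Real.sin x * (2 - Real.cos x) := by
    rw [hQ]
    exact mul_le_mul hsx (by linarith) hCx hsinx
  have hpoly := poly8 hx0 hx1 hy0 hyx
  rw [← hN, ← hD, ← hQ] at hpoly
  clear_value N D Q
  have h3 : x^2/8 ≤ Q/x - N/(D*y) := by
    rw [div_sub_div _ _ (ne_of_gt hx0) (ne_of_gt (mul_pos hD0 hy0)), le_div_iff₀ (mul_pos hx0 (mul_pos hD0 hy0))]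
    have hgap : x^3*y/8 ≤ y*(D*Q) - x*N := by linarith
    have hDle : 0 ≤ (1 - D) * (x^3*y) := mul_nonneg (by linarith) (by positivity)
    nlinarith [hgap, hDle]
  have h1 : Real.tan y / y ≤ N/(D*y) := by
    rw [← div_div]
    gcongr
  have h2 : Q/x ≤ Real.sin x * (2 - Real.cos x) / x := by gcongr
  linarith

lemma sqrt3_lt : Real.sqrt 3 < 1.7320509 := by
  rw [show (1.7320509:ℝ) = Real.sqrt (1.7320509^2) from (Real.sqrt_sq (by norm_num)).symm]
  apply Real.sqrt_lt_sqrt (by norm_num)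
  norm_num

lemma key6 : (π/6)^2/8 ≤ Real.sin (π/6) * (2 - Real.cos (π/6)) / (π/6) - Real.tan (π/10) / (π/10) := by
  have hpl : 3.141592 < π := Real.pi_gt_d6
  have hpu : π < 3.141593 := Real.pi_lt_d6
  have hy0 : (0:ℝ) < π/10 := by linarith
  have htan : Real.tan (π/10) ≤ 0.3258 := by
    have h := tan_ub hy0 (by linarith)
    have hD0 := Dpos hy0 (by linarith : π/10 ≤ 0.32)
    have : (π/10 - (π/10)^3/6 + 5*(π/10)^4/96) / (1 - (π/10)^2/2 - 5*(π/10)^4/96) ≤ 0.3258 := by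
      rw [div_le_iff₀ hD0]
      nlinarith [sq_nonneg (π/10), pow_pos hy0 2, pow_pos hy0 3, pow_pos hy0 4,
        pow_chain hy0 (by linarith : π/10 ≤ 0.3141593) 1,
        pow_chain hy0 (by linarith : π/10 ≤ 0.3141593) 2,
        pow_chain hy0 (by linarith : π/10 ≤ 0.3141593) 3]
    linarith
  rw [Real.sin_pi_div_six, Real.cos_pi_div_six]
  have hs3 := sqrt3_lt
  have htt : Real.tan (π/10) / (π/10) ≤ 3.258 / π := by
    rw [div_div_eq_mul_div, div_le_div_iff₀ (by linarith) (by linarith)]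
    nlinarith [Real.tan_pos_of_pos_of_lt_pi_div_two hy0 (by linarith), htan]
  have hss : 1/2 * (2 - Real.sqrt 3/2) / (π/6) = (6 - 3/2*Real.sqrt 3)/π := by
    rw [div_div_eq_mul_div]; ring_nf
  have hp2 : π^2 < 9.8696087 := by nlinarith
  have hp3 : π^3 < 31.0063 := by nlinarith [Real.pi_pos]
  have hfin : (π/6)^2/8 ≤ ((6 - 3/2*Real.sqrt 3) - 3.258)/π := by
    rw [le_div_iff₀ (by linarith : (0:ℝ) < π)]
    nlinarith [hs3, hp3]
  rw [hss]
  have : ((6 - 3/2*Real.sqrt 3) - 3.258)/π = (6 - 3/2*Real.sqrt 3)/π - 3.258/π := by ring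
  linarith [this ▸ hfin]

theorem foster_szabo_gap_lower_bound (n : ℕ) (hn : 6 ≤ n) (he : Even n) :
    0 < ((n : ℝ) / 2 * Real.sin (π / n) - ((n : ℝ) - 1) / 2 * Real.tan (π / (2 * n - 2)))
        - (n : ℝ) / 8 * Real.sin (2 * π / n) ∧
      π ^ 3 / 32 ≤ (n : ℝ) ^ 2 *
        (((n : ℝ) / 2 * Real.sin (π / n) - ((n : ℝ) - 1) / 2 * Real.tan (π / (2 * n - 2)))
          - (n : ℝ) / 8 * Real.sin (2 * π / n)) := by
  have hn6 : (6:ℝ) ≤ (n:ℝ) := by exact_mod_cast hn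
  have hn0 : (0:ℝ) < n := by linarith
  have h2n2 : (0:ℝ) < 2*(n:ℝ) - 2 := by linarith
  have hpi := Real.pi_pos
  have hx0 : 0 < π/(n:ℝ) := div_pos hpi hn0
  have hy0 : 0 < π/(2*(n:ℝ)-2) := div_pos hpi h2n2
  have hkey : (π/(n:ℝ))^2/8 ≤ Real.sin (π/n) * (2 - Real.cos (π/n)) / (π/(n:ℝ))
      - Real.tan (π/(2*(n:ℝ)-2)) / (π/(2*(n:ℝ)-2)) := by
    rcases eq_or_lt_of_le hn with h6 | h7
    · have h6' : (n:ℝ) = 6 := by exact_mod_cast h6.symm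
      rw [h6']
      norm_num
      convert key6 using 3 <;> norm_num
    · have hn8 : 8 ≤ n := by obtain ⟨k, hk⟩ := he; omega
      have hn8' : (8:ℝ) ≤ (n:ℝ) := by exact_mod_cast hn8
      apply key8 hx0 ?_ hy0 ?_
      · have h1 : π/(n:ℝ) ≤ π/8 := by gcongr
        have := Real.pi_lt_d2
        nlinarith
      · rw [show 4*(π/(n:ℝ))/7 = (4*π)/(7*(n:ℝ)) by ring,
          div_le_div_iff₀ h2n2 (by positivity)]
        nlinarith [mul_nonneg hpi.le (by linarith : (0:ℝ) ≤ (n:ℝ) - 8)]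
  have hmain : π ^ 3 / 32 ≤ (n : ℝ) ^ 2 *
      (((n : ℝ) / 2 * Real.sin (π / n) - ((n : ℝ) - 1) / 2 * Real.tan (π / (2 * n - 2)))
        - (n : ℝ) / 8 * Real.sin (2 * π / n)) := by
    have hs2 : Real.sin (2*π/(n:ℝ)) = 2*Real.sin (π/n)*Real.cos (π/n) := by
      rw [show 2*π/(n:ℝ) = 2*(π/(n:ℝ)) by ring, Real.sin_two_mul]
    have hne : (n:ℝ) ≠ 0 := ne_of_gt hn0
    have hne2 : 2*(n:ℝ) - 2 ≠ 0 := ne_of_gt h2n2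
    calc π ^ 3/32 = (π/(n:ℝ))^2/8 * (π/4*(n:ℝ)^2) := by field_simp; ring
    _ ≤ (Real.sin (π/n) * (2 - Real.cos (π/n)) / (π/(n:ℝ))
        - Real.tan (π/(2*(n:ℝ)-2)) / (π/(2*(n:ℝ)-2))) * (π/4*(n:ℝ)^2) :=
        mul_le_mul_of_nonneg_right hkey (by positivity)
    _ = (n : ℝ) ^ 2 * (((n : ℝ) / 2 * Real.sin (π / n)
          - ((n : ℝ) - 1) / 2 * Real.tan (π / (2 * n - 2)))
          - (n : ℝ) / 8 * Real.sin (2 * π / n)) := by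
        rw [hs2]; field_simp; ring
  refine ⟨?_, hmain⟩
  by_contra h
  push_neg at h
  have : (n:ℝ)^2 * (((n : ℝ) / 2 * Real.sin (π / n) - ((n : ℝ) - 1) / 2 * Real.tan (π / (2 * n - 2)))
      - (n : ℝ) / 8 * Real.sin (2 * π / n)) ≤ 0 :=
    mul_nonpos_of_nonneg_of_nonpos (sq_nonneg _) h
  nlinarith [pow_pos hpi 3]
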